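/- arXiv:1005.0399 — 2 statements merged into one kernel-verified Lean document; each statement's English description precedes it below -/
import Mathlib

section
/- Let A be a unital commutative C*-algebra, Ω a nonempty finite subset of A, and ε > 0. Then there is a δ > 0 such that whenever d ∈ ℕ and φ : A → ℂ^d is a unital positive linear map satisfying ‖φ(f*f) − φ(f)*φ(f)‖₂ < δ for all f ∈ Ω, there exists a unital algebra homomorphism φ̃ : A → ℂ^d such that ‖φ̃(f) − φ(f)‖₂ < ε for all f ∈ Ω. -/
open scoped ComplexOrder

noncomputable section

namespace Sofic

/-- The ℓ²-norm on `ℂ^d` with respect to the uniform probability measure `ζ`. -/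
def l2 (d : ℕ) (v : Fin d → ℂ) : ℝ :=
  Real.sqrt ((∑ k, ‖v k‖ ^ 2) / d)

section Aux
variable {A : Type*} [NormedCommRing A] [StarRing A] [CStarRing A]
    [NormedAlgebra ℂ A] [StarModule ℂ A] [CompleteSpace A]

theorem exists_sqrt_sInf [Nontrivial A] {c : A} (hc : IsSelfAdjoint c) :
    ∃ m : ℝ, m ∈ spectrum ℝ c ∧ ∃ b : A, star b * b = c - algebraMap ℝ A m := by
  letI : CommCStarAlgebra A := { }
  have hne : (spectrum ℝ c).Nonempty := hc.spectrum_nonempty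
  have hcpt : IsCompact (spectrum ℝ c) := spectrum.isCompact c
  set m := sInf (spectrum ℝ c) with hm
  have hmem : m ∈ spectrum ℝ c := hcpt.sInf_mem hne
  refine ⟨m, hmem, cfc (fun x : ℝ => Real.sqrt (x - m)) c, ?_⟩
  have hb : IsSelfAdjoint (cfc (fun x : ℝ => Real.sqrt (x - m)) c) := cfc_predicate _ c
  rw [hb.star_eq, ← cfc_mul _ _ c (by fun_prop) (by fun_prop)]
  have : ∀ x ∈ spectrum ℝ c, Real.sqrt (x - m) * Real.sqrt (x - m) = x - m := by
    intro x hx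
    exact Real.mul_self_sqrt (by linarith [csInf_le hcpt.bddBelow hx])
  rw [cfc_congr this, cfc_sub _ _ c, cfc_id' ℝ c, cfc_const m c]

variable [Nontrivial A] (s : A →ₗ[ℂ] ℂ) (h1 : s 1 = 1)
    (hpos : ∀ b : A, 0 ≤ s (star b * b))

include h1 hpos in
theorem s_sub_le {c : A} (hc : IsSelfAdjoint c) :
    ∃ m : ℝ, m ∈ spectrum ℝ c ∧ 0 ≤ s c - (m : ℂ) := by
  obtain ⟨m, hmem, b, hb⟩ := exists_sqrt_sInf hc
  refine ⟨m, hmem, ?_⟩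
  have := hpos b
  rwa [hb, map_sub, IsScalarTower.algebraMap_apply ℝ ℂ A, Algebra.algebraMap_eq_smul_one,
    map_smul, h1, smul_eq_mul, mul_one] at this

include h1 hpos in
theorem s_im_zero {c : A} (hc : IsSelfAdjoint c) : (s c).im = 0 := by
  obtain ⟨m, -, h⟩ := s_sub_le s h1 hpos hc
  have := (Complex.le_def.mp h).2
  simpa using this.symm

include h1 hpos in
theorem s_star (a : A) : s (star a) = star (s a) := by
  set c : A := a + star a with hcdef
  set e : A := Complex.I • (a - star a) with hedef
  have hc : IsSelfAdjoint c := by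
    simp only [IsSelfAdjoint, hcdef, star_add, star_star, add_comm]
  have he : IsSelfAdjoint e := by
    simp only [IsSelfAdjoint, hedef, star_smul, star_sub, star_star, Complex.star_def,
      Complex.conj_I, neg_smul, smul_sub, neg_sub]
    abel
  have hx := s_im_zero s h1 hpos hc
  have hy := s_im_zero s h1 hpos he
  have ha : a = (2⁻¹ : ℂ) • (c - Complex.I • e) := by
    simp only [hcdef, hedef, smul_smul, Complex.I_mul_I, smul_sub]
    module
  have hsa : star a = (2⁻¹ : ℂ) • (c + Complex.I • e) := by
    simp only [hcdef, hedef, smul_smul, Complex.I_mul_I, smul_add]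
    module
  rw [hsa, ha]
  simp only [map_smul, map_add, map_sub, smul_eq_mul]
  set x := s c
  set y := s e
  rw [Complex.ext_iff]
  constructor <;>
    simp [Complex.mul_re, Complex.mul_im, Complex.add_re, Complex.add_im, hx, hy]

include h1 hpos in
theorem key (Ω : Finset A) :
    ∃ χ : WeakDual.characterSpace ℂ A,
      ∑ f ∈ Ω, ‖(χ f : ℂ) - s f‖ ^ 2 ≤ ∑ f ∈ Ω, ‖s (star f * f) - star (s f) * s f‖ := by
  letI : CommCStarAlgebra A := { }
  set g : A := ∑ f ∈ Ω, star (f - s f • 1) * (f - s f • 1) with hgdef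
  have hg : IsSelfAdjoint g := by
    apply Finset.sum_induction _ IsSelfAdjoint (fun x y => IsSelfAdjoint.add) (by simp)
    intro f _
    exact IsSelfAdjoint.star_mul_self _
  -- value of s at each summand
  have hterm : ∀ f : A, s (star (f - s f • 1) * (f - s f • 1))
      = s (star f * f) - star (s f) * s f := by
    intro f
    have hx : star (f - s f • 1) * (f - s f • 1)
        = star f * f - s f • star f - star (s f) • f + (star (s f) * s f) • (1 : A) := by
      simp only [star_sub, star_smul, star_one, sub_mul, mul_sub, smul_mul_assoc,
        mul_smul_comm, smul_smul, smul_sub, one_mul, mul_one]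
      module
    rw [hx, map_add, map_sub, map_sub, map_smul, map_smul, map_smul, h1,
      s_star s h1 hpos f, smul_eq_mul, smul_eq_mul, smul_eq_mul, mul_one]
    ring
  -- get a character achieving a low value
  obtain ⟨m, hmem, hle⟩ := s_sub_le s h1 hpos hg
  have hmem' : (m : ℂ) ∈ spectrum ℂ g := spectrum.algebraMap_mem ℂ hmem
  obtain ⟨χ, hχ⟩ := WeakDual.CharacterSpace.mem_spectrum_iff_exists.mp hmem'
  refine ⟨χ, ?_⟩
  -- character value is the sum of squares
  have hchi : (χ g : ℂ) = ∑ f ∈ Ω, (‖(χ f : ℂ) - s f‖ ^ 2 : ℝ) := by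
    rw [hgdef, map_sum]
    push_cast
    refine Finset.sum_congr rfl fun f _ => ?_
    have : (χ (star (f - s f • 1) * (f - s f • 1)) : ℂ)
        = star (χ (f - s f • 1)) * χ (f - s f • 1) := by
      rw [map_mul, map_star]
    rw [this, map_sub, map_smul, map_one, smul_eq_mul, mul_one]
    set z : ℂ := (χ f : ℂ) - s f
    rw [Complex.star_def, mul_comm, Complex.mul_conj, Complex.normSq_eq_norm_sq]
    norm_cast
  -- compare
  have hm_eq : m = ∑ f ∈ Ω, ‖(χ f : ℂ) - s f‖ ^ 2 := by
    have := hχ.symm.trans hchi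
    exact_mod_cast this
  have hsg : (s g).re = ∑ f ∈ Ω, (s (star f * f) - star (s f) * s f).re := by
    rw [hgdef, map_sum, Complex.re_sum]
    exact Finset.sum_congr rfl fun f _ => by rw [hterm f]
  have hle' : m ≤ (s g).re := by
    have := (Complex.le_def.mp hle).1
    simpa using this
  calc ∑ f ∈ Ω, ‖(χ f : ℂ) - s f‖ ^ 2 = m := hm_eq.symm
    _ ≤ (s g).re := hle'
    _ = ∑ f ∈ Ω, (s (star f * f) - star (s f) * s f).re := hsg
    _ ≤ ∑ f ∈ Ω, ‖s (star f * f) - star (s f) * s f‖ :=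
        Finset.sum_le_sum fun f _ => by
          exact Complex.re_le_norm _

end Aux

/-- Lemma 3.3 (`L-mult perturbation`): let `A` be a unital commutative C*-algebra, `Ω` a
nonempty finite subset of `A` and `ε > 0`.  Then there is a `δ > 0` such that whenever
`d ∈ ℕ` and `φ : A → ℂ^d` is a unital positive linear map satisfying
`‖φ(f*f) − φ(f)*φ(f)‖₂ < δ` for all `f ∈ Ω`, there exists a unital homomorphism
`φ̃ : A → ℂ^d` with `‖φ̃(f) − φ(f)‖₂ < ε` for all `f ∈ Ω`. -/
theorem stmt4 {A : Type*} [NormedCommRing A] [StarRing A] [CStarRing A]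
    [NormedAlgebra ℂ A] [StarModule ℂ A] [CompleteSpace A]
    (Ω : Finset A) (hΩ : Ω.Nonempty) (ε : ℝ) (hε : 0 < ε) :
    ∃ δ > (0 : ℝ), ∀ (d : ℕ) (φ : A →ₗ[ℂ] (Fin d → ℂ)),
      φ 1 = 1 →
      (∀ b : A, ∀ k, 0 ≤ φ (star b * b) k) →
      (∀ f ∈ Ω, l2 d (φ (star f * f) - star (φ f) * φ f) < δ) →
      ∃ ψ : A →ₐ[ℂ] (Fin d → ℂ), ∀ f ∈ Ω, l2 d (ψ f - φ f) < ε := by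
  have hcard : (0 : ℝ) < Ω.card := by exact_mod_cast Finset.card_pos.mpr hΩ
  set δ : ℝ := ε ^ 2 / Ω.card with hδdef
  have hδpos : 0 < δ := by positivity
  refine ⟨δ, hδpos, ?_⟩
  intro d φ hφ1 hφpos hδ
  rcases Nat.eq_zero_or_pos d with hd | hd
  · subst hd
    exact ⟨Pi.algHom (A := fun _ : Fin 0 => ℂ) ℂ (fun i => i.elim0), fun f hf => by simpa [l2] using hε⟩
  have hdR : (0 : ℝ) < d := by exact_mod_cast hd
  have hA : Nontrivial A := by
    refine ⟨1, 0, fun h => ?_⟩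
    have h2 := congrFun hφ1 ⟨0, hd⟩
    rw [h, map_zero] at h2
    exact zero_ne_one (α := ℂ) (by simpa using h2)
  set sk : Fin d → (A →ₗ[ℂ] ℂ) := fun k => (LinearMap.proj k).comp φ with hsk
  have h1k : ∀ k, sk k 1 = 1 := fun k => congrFun hφ1 k
  have hposk : ∀ k, ∀ b : A, 0 ≤ sk k (star b * b) := fun k b => hφpos b k
  choose χ hχ using fun k => key (sk k) (h1k k) (hposk k) Ω
  refine ⟨Pi.algHom (A := fun _ : Fin d => ℂ) ℂ (fun k => WeakDual.CharacterSpace.toAlgHom (χ k)), fun f hf => ?_⟩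
  -- per-element defect bound
  have key2 : ∀ f' ∈ Ω,
      ∑ k, ‖sk k (star f' * f') - star (sk k f') * sk k f'‖ < δ * d := by
    intro f' hf'
    have h2 := hδ f' hf'
    have hveq : ∀ k, ‖(φ (star f' * f') - star (φ f') * φ f') k‖
        = ‖sk k (star f' * f') - star (sk k f') * sk k f'‖ := by
      intro k; rfl
    rw [l2, Real.sqrt_lt' hδpos, div_lt_iff₀ hdR] at h2
    have hT : ∑ k, ‖sk k (star f' * f') - star (sk k f') * sk k f'‖ ^ 2 < δ ^ 2 * d := by
      refine lt_of_eq_of_lt ?_ h2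
      exact (Finset.sum_congr rfl fun k _ => by rw [hveq k]).symm
    have hcs := sq_sum_le_card_mul_sum_sq
      (s := (Finset.univ : Finset (Fin d)))
      (f := fun k => ‖sk k (star f' * f') - star (sk k f') * sk k f'‖)
    rw [Finset.card_univ, Fintype.card_fin] at hcs
    have hnn : 0 ≤ ∑ k, ‖sk k (star f' * f') - star (sk k f') * sk k f'‖ :=
      Finset.sum_nonneg fun k _ => norm_nonneg _
    nlinarith [hcs, hT, mul_pos hδpos hdR]
  -- assemble
  have hS : ∑ k, ‖(χ k f : ℂ) - φ f k‖ ^ 2 < ε ^ 2 * d := by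
    calc ∑ k, ‖(χ k f : ℂ) - φ f k‖ ^ 2
        ≤ ∑ k, ∑ f' ∈ Ω, ‖(χ k f' : ℂ) - sk k f'‖ ^ 2 := by
          refine Finset.sum_le_sum fun k _ => ?_
          exact Finset.single_le_sum (f := fun f' => ‖(χ k f' : ℂ) - sk k f'‖ ^ 2)
            (fun i _ => by positivity) hf
      _ ≤ ∑ k, ∑ f' ∈ Ω, ‖sk k (star f' * f') - star (sk k f') * sk k f'‖ :=
          Finset.sum_le_sum fun k _ => hχ k
      _ = ∑ f' ∈ Ω, ∑ k, ‖sk k (star f' * f') - star (sk k f') * sk k f'‖ :=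
          Finset.sum_comm
      _ < ∑ _f' ∈ Ω, δ * d := Finset.sum_lt_sum_of_nonempty hΩ key2
      _ = ε ^ 2 * d := by
          rw [Finset.sum_const, nsmul_eq_mul, hδdef]
          field_simp
  rw [l2, Real.sqrt_lt' hε, div_lt_iff₀ hdR]
  refine lt_of_eq_of_lt ?_ hS
  exact Finset.sum_congr rfl fun k _ => rfl


end Sofic
end
end

section
/- Let S = {p_n} and T = {q_n} be dynamically generating sequences in the unit ball of C_ℝ(X). Then h_Σ(T) = h_Σ(S). -/
open MeasureTheory Filter
open scoped ENNReal ComplexOrder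

set_option maxHeartbeats 2000000

noncomputable section

namespace Sofic

/-- The sup-norm on `ℂ^d`. -/
def linf (d : ℕ) (v : Fin d → ℂ) : ℝ := ⨆ k, ‖v k‖

/-- The uniform probability state `ζ` on `ℂ^d`. -/
def unif (d : ℕ) (v : Fin d → ℂ) : ℂ := (∑ k, v k) / d

/-- The induced action of a permutation of `{1,…,d}` on `ℂ^d`: `σ_s(f) = f ∘ σ_s⁻¹`. -/
def permAct {d : ℕ} (π : Equiv.Perm (Fin d)) (v : Fin d → ℂ) : Fin d → ℂ :=
  fun k => v (π⁻¹ k)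

/-- `N_ε(S,ρ)`: the maximal cardinality of a finite `ε`-separated subset of `S` with
respect to the pseudometric `ρ`.  (For `ε = 0` this is the cardinality modulo the relation
of zero distance.) -/
def sepNum {Y : Type*} (S : Set Y) (ρ : Y → Y → ℝ) (ε : ℝ) : ℕ∞ :=
  ⨆ t ∈ {t : Finset Y | ↑t ⊆ S ∧ ∀ x ∈ t, ∀ y ∈ t, x ≠ y → ε < ρ x y}, (t.card : ℕ∞)

/-- Extended logarithm of an extended natural number: `log 0 = -∞`, `log ∞ = ∞`. -/
def elog (n : ℕ∞) : EReal :=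
  if n = ⊤ then (⊤ : EReal) else if n = 0 then (⊥ : EReal)
  else ((Real.log n.toNat : ℝ) : EReal)

/-- A sofic approximation sequence `Σ = {σ_i : G → Sym(d_i)}` for a countable group `G`. -/
structure SoficApprox (G : Type*) [Group G] where
  d : ℕ → ℕ
  σ : ∀ i, G → Equiv.Perm (Fin (d i))
  d_pos : ∀ i, 0 < d i
  d_tendsto : Tendsto d atTop atTop
  approx_mul : ∀ s t : G, Tendsto
    (fun i => (({k : Fin (d i) | σ i (s * t) k = σ i s (σ i t k)} : Set (Fin (d i))).ncard : ℝ)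
      / d i) atTop (nhds 1)
  approx_free : ∀ s t : G, s ≠ t → Tendsto
    (fun i => (({k : Fin (d i) | σ i s k ≠ σ i t k} : Set (Fin (d i))).ncard : ℝ)
      / d i) atTop (nhds 1)

/-- A countable group is sofic if it admits a sofic approximation sequence. -/
def IsSofic (G : Type*) [Group G] : Prop := Nonempty (SoficApprox G)

variable {G : Type*} [Group G] {X : Type*} [TopologicalSpace X]

/-- The action `α_s(f) = f ∘ s⁻¹` of `G` on `C(X)` induced by a continuous action `T` of
`G` on `X`. -/
def alphaC (T : G → X → X) (hc : ∀ s, Continuous (T s)) (s : G) (f : C(X, ℂ)) : C(X, ℂ) :=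
  f.comp ⟨T s⁻¹, hc s⁻¹⟩

/-- A real-valued continuous function viewed as an element of `C(X,ℂ)`. -/
def cplx (f : C(X, ℝ)) : C(X, ℂ) :=
  ⟨fun x => (f x : ℂ), Complex.continuous_ofReal.comp f.continuous⟩

/-- The pseudometric `ρ_S` on unital homomorphisms `C(X) → ℂ^d` associated to a sequence
`S = {p_n}_{n≥1}` in the unit ball of `C_ℝ(X)` (here `p n` is `p_{n+1}`). -/
def rhoSeqC {d : ℕ} (p : ℕ → C(X, ℝ)) (φ ψ : C(X, ℂ) →ₐ[ℂ] (Fin d → ℂ)) : ℝ :=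
  ∑' n : ℕ, (1 / 2) ^ (n + 1) * l2 d (φ (cplx (p n)) - ψ (cplx (p n)))

/-- `Hom(S,F,δ,σ)` (Definition 4.1): unital homomorphisms `φ : C(X) → ℂ^d` such that
`Σ_n 2^{-n} ‖φ(α_s(p_n)) − σ_s(φ(p_n))‖₂ < δ` for all `s ∈ F`. -/
def HomTop (T : G → X → X) (hc : ∀ s, Continuous (T s)) (p : ℕ → C(X, ℝ))
    (F : Finset G) (δ : ℝ) {d : ℕ} (σ : G → Equiv.Perm (Fin d)) :
    Set (C(X, ℂ) →ₐ[ℂ] (Fin d → ℂ)) :=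
  {φ | ∀ s ∈ F,
    ∑' n : ℕ, (1 / 2) ^ (n + 1) *
      l2 d (φ (alphaC T hc s (cplx (p n))) - permAct (σ s) (φ (cplx (p n)))) < δ}

/-- The topological entropy `h_Σ(S)` of a sequence `S` in the unit ball of `C_ℝ(X)`
(Definition 4.2). -/
def hTop (T : G → X → X) (hc : ∀ s, Continuous (T s)) (SA : SoficApprox G)
    (p : ℕ → C(X, ℝ)) : EReal :=
  ⨆ ε : {ε : ℝ // 0 < ε}, ⨅ F : {F : Finset G // F.Nonempty}, ⨅ δ : {δ : ℝ // 0 < δ},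
    limsup (fun i => ((((SA.d i : ℝ))⁻¹ : ℝ) : EReal) *
      elog (sepNum (HomTop T hc p (F : Finset G) (δ : ℝ) (SA.σ i)) (rhoSeqC p) (ε : ℝ)))
      atTop

/-- A sequence in the unit ball of `C_ℝ(X)` is dynamically generating if it is not
contained in any proper `G`-invariant closed unital *-subalgebra of `C(X)`. -/
def DynGenTop (T : G → X → X) (hc : ∀ s, Continuous (T s)) (p : ℕ → C(X, ℝ)) : Prop :=
  ∀ A : StarSubalgebra ℂ C(X, ℂ), IsClosed (A : Set C(X, ℂ)) →
    (∀ (s : G) f, f ∈ A → alphaC T hc s f ∈ A) → (∀ n, cplx (p n) ∈ A) → A = ⊤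

variable {d : ℕ}

lemma l2_nonneg (v : Fin d → ℂ) : 0 ≤ l2 d v := Real.sqrt_nonneg _

lemma l2_eq_norm (v : Fin d → ℂ) :
    l2 d v = Real.sqrt (d : ℝ)⁻¹ * ‖(WithLp.equiv 2 (Fin d → ℂ)).symm v‖ := by
  rw [EuclideanSpace.norm_eq, l2, div_eq_mul_inv,
    Real.sqrt_mul (by positivity) _, mul_comm]
  rfl

lemma l2_add_le (v w : Fin d → ℂ) : l2 d (v + w) ≤ l2 d v + l2 d w := by
  rw [l2_eq_norm, l2_eq_norm, l2_eq_norm, ← mul_add, WithLp.equiv_symm_apply, WithLp.toLp_add]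
  exact mul_le_mul_of_nonneg_left (norm_add_le _ _) (Real.sqrt_nonneg _)

lemma l2_neg (v : Fin d → ℂ) : l2 d (-v) = l2 d v := by
  simp [l2]

lemma l2_sub_le (v w : Fin d → ℂ) : l2 d (v - w) ≤ l2 d v + l2 d w := by
  rw [sub_eq_add_neg]
  simpa [l2_neg] using l2_add_le v (-w)

lemma l2_smul (a : ℂ) (v : Fin d → ℂ) : l2 d (a • v) = ‖a‖ * l2 d v := by
  rw [l2_eq_norm, l2_eq_norm, WithLp.equiv_symm_apply, WithLp.toLp_smul, norm_smul]
  ring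

lemma l2_mono {v w : Fin d → ℂ} (h : ∀ k, ‖v k‖ ≤ ‖w k‖) : l2 d v ≤ l2 d w := by
  apply Real.sqrt_le_sqrt
  have : (∑ k, ‖v k‖ ^ 2) ≤ ∑ k, ‖w k‖ ^ 2 := by
    apply Finset.sum_le_sum
    intro k _
    exact pow_le_pow_left₀ (norm_nonneg _) (h k) 2
  gcongr

lemma l2_le_of_bound {v : Fin d → ℂ} {B : ℝ} (hB : 0 ≤ B) (h : ∀ k, ‖v k‖ ≤ B) :
    l2 d v ≤ B := by
  have h1 : (∑ k, ‖v k‖ ^ 2) / d ≤ B ^ 2 := by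
    rcases Nat.eq_zero_or_pos d with hd | hd
    · subst hd; simp; positivity
    · rw [div_le_iff₀ (by positivity)]
      calc (∑ k, ‖v k‖ ^ 2) ≤ ∑ _k : Fin d, B ^ 2 := by
            apply Finset.sum_le_sum
            intro k _
            exact pow_le_pow_left₀ (norm_nonneg _) (h k) 2
        _ = B ^ 2 * d := by simp [mul_comm]
  calc l2 d v ≤ Real.sqrt (B ^ 2) := Real.sqrt_le_sqrt h1
    _ = B := Real.sqrt_sq hB

lemma l2_scale_mono {v w : Fin d → ℂ} {B : ℝ} (hB : 0 ≤ B)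
    (h : ∀ k, ‖v k‖ ≤ B * ‖w k‖) : l2 d v ≤ B * l2 d w := by
  have : l2 d v ≤ l2 d ((B : ℂ) • w) := by
    apply l2_mono
    intro k
    rw [Pi.smul_apply, norm_smul, Complex.norm_real, Real.norm_of_nonneg hB]
    exact h k
  calc l2 d v ≤ l2 d ((B : ℂ) • w) := this
    _ = B * l2 d w := by rw [l2_smul, Complex.norm_real, Real.norm_of_nonneg hB]

lemma linf_nonneg (v : Fin d → ℂ) : 0 ≤ linf d v :=
  Real.iSup_nonneg fun k => norm_nonneg _

lemma norm_le_linf (v : Fin d → ℂ) (k : Fin d) : ‖v k‖ ≤ linf d v :=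
  le_ciSup (f := fun k => ‖v k‖) (Set.Finite.bddAbove (Set.finite_range _)) k

lemma linf_le {v : Fin d → ℂ} {B : ℝ} (hB : 0 ≤ B) (h : ∀ k, ‖v k‖ ≤ B) :
    linf d v ≤ B := Real.iSup_le h hB

lemma l2_le_linf (v : Fin d → ℂ) : l2 d v ≤ linf d v :=
  l2_le_of_bound (linf_nonneg v) (norm_le_linf v)

@[simp] lemma permAct_apply (π : Equiv.Perm (Fin d)) (v : Fin d → ℂ) (k : Fin d) :
    permAct π v k = v (π⁻¹ k) := rfl

lemma permAct_sub (π : Equiv.Perm (Fin d)) (v w : Fin d → ℂ) :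
    permAct π (v - w) = permAct π v - permAct π w := rfl

lemma permAct_mul (π : Equiv.Perm (Fin d)) (v w : Fin d → ℂ) :
    permAct π (v * w) = permAct π v * permAct π w := rfl

lemma permAct_smul (π : Equiv.Perm (Fin d)) (a : ℂ) (v : Fin d → ℂ) :
    permAct π (a • v) = a • permAct π v := rfl

lemma l2_permAct (π : Equiv.Perm (Fin d)) (v : Fin d → ℂ) :
    l2 d (permAct π v) = l2 d v := by
  unfold l2 permAct
  rw [Equiv.sum_comp π⁻¹ (fun k => ‖v k‖ ^ 2)]

lemma linf_permAct (π : Equiv.Perm (Fin d)) (v : Fin d → ℂ) :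
    linf d (permAct π v) = linf d v := by
  have h : ∀ (π : Equiv.Perm (Fin d)) (v : Fin d → ℂ),
      linf d (permAct π v) ≤ linf d v := fun π v =>
    linf_le (linf_nonneg v) fun k => norm_le_linf v _
  refine le_antisymm (h π v) ?_
  have := h π⁻¹ (permAct π v)
  have hv : permAct π⁻¹ (permAct π v) = v := by
    funext k; simp [permAct]
  rwa [hv] at this

lemma elog_mono : Monotone elog := by
  intro m n h
  unfold elog
  rcases eq_or_ne n ⊤ with hn | hn
  · simp [hn]
  · have hm : m ≠ ⊤ := fun hm => hn (top_le_iff.mp (hm ▸ h))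
    rw [if_neg hn, if_neg hm]
    rcases eq_or_ne m 0 with h0 | h0
    · simp [h0]
    · have hn0 : n ≠ 0 := by
        intro e
        rw [e] at h
        exact h0 (le_antisymm h zero_le)
      rw [if_neg h0, if_neg hn0, EReal.coe_le_coe_iff]
      apply Real.log_le_log
      · have hmn : m.toNat ≠ 0 := by
          intro e
          rcases ENat.toNat_eq_zero.mp e with h' | h'
          · exact h0 h'
          · exact hm h'
        exact_mod_cast Nat.pos_of_ne_zero hmn
      · exact_mod_cast ENat.toNat_le_toNat h hn

lemma sepNum_le_sepNum {Y : Type*} {S S' : Set Y} {ρ ρ' : Y → Y → ℝ} {ε ε' : ℝ}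
    (hS : S ⊆ S')
    (hsep : ∀ x ∈ S, ∀ y ∈ S, x ≠ y → ε < ρ x y → ε' < ρ' x y) :
    sepNum S ρ ε ≤ sepNum S' ρ' ε' := by
  apply iSup₂_le
  intro t ht
  refine le_iSup₂ (f := fun (t : Finset Y) _ => (t.card : ℕ∞)) t ?_
  refine ⟨ht.1.trans hS, fun x hx y hy hxy => ?_⟩
  exact hsep x (ht.1 hx) y (ht.1 hy) hxy (ht.2 x hx y hy hxy)

lemma sepNum_empty {Y : Type*} [IsEmpty Y] (S : Set Y) (ρ : Y → Y → ℝ) (ε : ℝ) :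
    sepNum S ρ ε = 0 := by
  apply le_antisymm _ zero_le
  apply iSup₂_le
  intro t _
  simp [Finset.eq_empty_of_isEmpty t]

/-- Relative mismatch of `σ(st)` versus `σ s ∘ σ t`. -/
def mismQ {G : Type*} [Group G] (d : ℕ) (σ : G → Equiv.Perm (Fin d)) (s t : G) : ℝ :=
  Real.sqrt ((({k : Fin d | σ (s * t) k ≠ σ s (σ t k)} : Set (Fin d)).ncard : ℝ) / d)

lemma l2_perm_mismatch {d : ℕ} (σ : G → Equiv.Perm (Fin d)) (s t : G)
    (v : Fin d → ℂ) {B : ℝ} (hB : 0 ≤ B) (hv : ∀ k, ‖v k‖ ≤ B) :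
    l2 d (permAct (σ (s * t)) v - permAct (σ s) (permAct (σ t) v))
      ≤ 2 * B * mismQ d σ s t := by
  classical
  set w : Fin d → ℂ := permAct (σ (s * t)) v - permAct (σ s) (permAct (σ t) v) with hw
  set bad : Set (Fin d) := {k : Fin d | σ (s * t) k ≠ σ s (σ t k)} with hbad
  have hre : ∀ k : Fin d,
      ‖w ((σ (s*t)) k)‖ ^ 2 ≤ if k ∈ bad then (2 * B) ^ 2 else 0 := by
    intro k
    by_cases hk : k ∈ bad
    · rw [if_pos hk]
      have hb : ‖w ((σ (s*t)) k)‖ ≤ 2 * B := by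
        simp only [hw, Pi.sub_apply, permAct]
        refine (norm_sub_le _ _).trans ?_
        have h1 := hv ((σ (s*t))⁻¹ ((σ (s*t)) k))
        have h2 := hv ((σ t)⁻¹ ((σ s)⁻¹ ((σ (s*t)) k)))
        linarith
      exact pow_le_pow_left₀ (norm_nonneg _) hb 2
    · rw [if_neg hk]
      have hk' : σ (s * t) k = σ s (σ t k) := not_not.mp hk
      have hz : w ((σ (s*t)) k) = 0 := by
        simp only [hw, Pi.sub_apply, permAct]
        have heq : (σ (s*t))⁻¹ ((σ (s*t)) k) = (σ t)⁻¹ ((σ s)⁻¹ ((σ (s*t)) k)) := by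
          rw [(by simp : (σ (s*t))⁻¹ ((σ (s*t)) k) = k), hk']
          simp
        rw [← heq, (by simp : (σ (s*t))⁻¹ ((σ (s*t)) k) = k), sub_self]
      rw [hz]
      simp
  have key : (∑ k, ‖w k‖ ^ 2) ≤ (bad.ncard : ℝ) * (2 * B) ^ 2 := by
    calc (∑ k, ‖w k‖ ^ 2) = ∑ k, ‖w ((σ (s*t)) k)‖ ^ 2 :=
          (Equiv.sum_comp (σ (s*t)) (fun k => ‖w k‖ ^ 2)).symm
      _ ≤ ∑ k, if k ∈ bad then (2 * B) ^ 2 else 0 := Finset.sum_le_sum (fun k _ => hre k)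
      _ = (bad.ncard : ℝ) * (2 * B) ^ 2 := by
          rw [Finset.sum_ite, Finset.sum_const, Finset.sum_const_zero, add_zero,
            Set.ncard_eq_toFinset_card' bad, nsmul_eq_mul]
          congr 2
          simp [hbad, Set.toFinset_setOf]
  have hfrac : (∑ k, ‖w k‖ ^ 2) / d ≤ ((bad.ncard : ℝ) / d) * (2 * B) ^ 2 := by
    rcases Nat.eq_zero_or_pos d with hd | hd
    · simp [hd]
    · rw [div_mul_eq_mul_div]
      gcongr
  calc l2 d w ≤ Real.sqrt (((bad.ncard : ℝ) / d) * (2 * B) ^ 2) := Real.sqrt_le_sqrt hfrac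
    _ = 2 * B * mismQ d σ s t := by
        rw [Real.sqrt_mul (by positivity), Real.sqrt_sq (by positivity), mismQ, mul_comm]



section MoreBasic
variable {d : ℕ}

lemma l2_zero : l2 d 0 = 0 := by simp [l2]

lemma permAct_add (π : Equiv.Perm (Fin d)) (v w : Fin d → ℂ) :
    permAct π (v + w) = permAct π v + permAct π w := rfl

lemma permAct_zero (π : Equiv.Perm (Fin d)) : permAct π (0 : Fin d → ℂ) = 0 := rfl

lemma permAct_one (π : Equiv.Perm (Fin d)) : permAct π (1 : Fin d → ℂ) = 1 := rfl

end MoreBasic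

variable {T : G → X → X} {hc : ∀ s, Continuous (T s)}

lemma alphaC_apply (s : G) (f : C(X, ℂ)) (x : X) :
    alphaC T hc s f x = f (T s⁻¹ x) := rfl

lemma alphaC_comp (hTmul : ∀ s t : G, T (s * t) = T s ∘ T t) (s t : G) (f : C(X, ℂ)) :
    alphaC T hc s (alphaC T hc t f) = alphaC T hc (s * t) f := by
  ext x
  simp only [alphaC_apply]
  rw [mul_inv_rev, hTmul]
  rfl

lemma alphaC_one (hT1 : T 1 = id) (f : C(X, ℂ)) : alphaC T hc 1 f = f := by
  ext x
  simp only [alphaC_apply, inv_one, hT1]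
  rfl

lemma alphaC_mul' (s : G) (f g : C(X, ℂ)) :
    alphaC T hc s (f * g) = alphaC T hc s f * alphaC T hc s g := by
  ext x; rfl

lemma alphaC_sub (s : G) (f g : C(X, ℂ)) :
    alphaC T hc s (f - g) = alphaC T hc s f - alphaC T hc s g := by
  ext x; rfl

lemma alphaC_smul (s : G) (a : ℂ) (f : C(X, ℂ)) :
    alphaC T hc s (a • f) = a • alphaC T hc s f := by
  ext x; rfl

lemma alphaC_one' (s : G) : alphaC T hc s (1 : C(X, ℂ)) = 1 := by
  ext x; rfl

lemma alphaC_star (s : G) (f : C(X, ℂ)) :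
    alphaC T hc s (star f) = star (alphaC T hc s f) := by
  ext x; rfl

variable [CompactSpace X]

lemma norm_alphaC_le (s : G) (f : C(X, ℂ)) : ‖alphaC T hc s f‖ ≤ ‖f‖ := by
  rw [ContinuousMap.norm_le _ (norm_nonneg f)]
  intro x
  exact ContinuousMap.norm_coe_le_norm f _

lemma norm_alphaC (hT1 : T 1 = id) (hTmul : ∀ s t : G, T (s * t) = T s ∘ T t)
    (s : G) (f : C(X, ℂ)) : ‖alphaC T hc s f‖ = ‖f‖ := by
  refine le_antisymm (norm_alphaC_le s f) ?_
  have h := norm_alphaC_le (T := T) (hc := hc) s⁻¹ (alphaC T hc s f)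
  rwa [alphaC_comp hTmul, inv_mul_cancel, alphaC_one hT1] at h

lemma norm_cplx_le {p : C(X, ℝ)} (hp : ∀ x, |p x| ≤ 1) : ‖cplx p‖ ≤ 1 := by
  rw [ContinuousMap.norm_le _ zero_le_one]
  intro x
  show ‖(p x : ℂ)‖ ≤ 1
  rw [Complex.norm_real, Real.norm_eq_abs]
  exact hp x

lemma cplx_star (p : C(X, ℝ)) : star (cplx p) = cplx p := by
  ext x
  show star ((p x : ℂ)) = (p x : ℂ)
  exact Complex.conj_ofReal _

/-- Every coordinate of an algebra homomorphism `C(X,ℂ) → ℂ^d` is contractive. -/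
lemma hom_coord_le [Nonempty X] {d : ℕ} (φ : C(X, ℂ) →ₐ[ℂ] (Fin d → ℂ))
    (f : C(X, ℂ)) (k : Fin d) : ‖φ f k‖ ≤ ‖f‖ := by
  have h : φ f k ∈ spectrum ℂ f := by
    have := AlgHom.apply_mem_spectrum ((Pi.evalAlgHom ℂ (fun _ : Fin d => ℂ) k).comp φ) f
    simpa using this
  exact spectrum.norm_le_norm_of_mem h



section Transfer

variable {T : G → X → X} {hc : ∀ s, Continuous (T s)}

/-- The set of translates of the generating sequence. -/
def gens (T : G → X → X) (hc : ∀ s, Continuous (T s)) (r : ℕ → C(X, ℝ)) : Set C(X, ℂ) :=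
  {f | ∃ s n, f = alphaC T hc s (cplx (r n))}

/-- `g` admits quantitative transfer estimates in terms of the data of `r`. -/
def Transfer (T : G → X → X) (hc : ∀ s, Continuous (T s)) (r : ℕ → C(X, ℝ))
    (g : C(X, ℂ)) : Prop :=
  ∃ (E : Finset G) (N : ℕ) (L : ℝ), 0 ≤ L ∧
    ∀ (d : ℕ) (σ : G → Equiv.Perm (Fin d)) (φ ψ : C(X, ℂ) →ₐ[ℂ] (Fin d → ℂ)) (c : ℝ),
      0 ≤ c →
      ((∀ t ∈ E, ∀ n ≤ N,
          l2 d (φ (alphaC T hc t (cplx (r n))) - ψ (alphaC T hc t (cplx (r n)))) ≤ c) →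
        l2 d (φ g - ψ g) ≤ L * c) ∧
      (∀ s : G,
        (∀ t ∈ E, (∀ n ≤ N,
            l2 d (φ (alphaC T hc (s * t) (cplx (r n)))
              - permAct (σ (s * t)) (φ (cplx (r n)))) ≤ c
            ∧ l2 d (φ (alphaC T hc t (cplx (r n)))
              - permAct (σ t) (φ (cplx (r n)))) ≤ c)
          ∧ mismQ d σ s t ≤ c) →
        l2 d (φ (alphaC T hc s g) - permAct (σ s) (φ g)) ≤ L * c)

variable [CompactSpace X] [Nonempty X]

lemma transfer_monomial
    (hTmul : ∀ s t : G, T (s * t) = T s ∘ T t)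
    {r : ℕ → C(X, ℝ)} (hr : ∀ n x, |r n x| ≤ 1) :
    ∀ u ∈ Submonoid.closure (gens T hc r), ‖u‖ ≤ 1 ∧ Transfer T hc r u := by
  intro u hu
  induction hu using Submonoid.closure_induction with
  | mem x hx =>
    obtain ⟨t, n, rfl⟩ := hx
    constructor
    · exact (norm_alphaC_le t _).trans (norm_cplx_le (hr n))
    refine ⟨{t}, n, 4, by norm_num, ?_⟩
    intro d σ φ ψ c hc0
    constructor
    · intro hyp
      have h := hyp t (Finset.mem_singleton_self t) n le_rfl
      linarith
    · intro s hyp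
      obtain ⟨h1, hm⟩ := hyp t (Finset.mem_singleton_self t)
      obtain ⟨hst, ht⟩ := h1 n le_rfl
      rw [alphaC_comp hTmul]
      have key : φ (alphaC T hc (s * t) (cplx (r n)))
            - permAct (σ s) (φ (alphaC T hc t (cplx (r n))))
          = (φ (alphaC T hc (s * t) (cplx (r n))) - permAct (σ (s * t)) (φ (cplx (r n))))
            + (permAct (σ (s * t)) (φ (cplx (r n)))
              - permAct (σ s) (permAct (σ t) (φ (cplx (r n)))))
            + permAct (σ s) (permAct (σ t) (φ (cplx (r n)))
              - φ (alphaC T hc t (cplx (r n)))) := by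
        rw [permAct_sub]
        abel
      rw [key]
      have hb2 : l2 d (permAct (σ (s * t)) (φ (cplx (r n)))
          - permAct (σ s) (permAct (σ t) (φ (cplx (r n))))) ≤ 2 * mismQ d σ s t := by
        have := l2_perm_mismatch σ s t (φ (cplx (r n))) (B := 1) zero_le_one
          (fun k => (hom_coord_le φ _ k).trans (norm_cplx_le (hr n)))
        simpa using this
      have hb3 : l2 d (permAct (σ s) (permAct (σ t) (φ (cplx (r n)))
          - φ (alphaC T hc t (cplx (r n))))) ≤ c := by
        rw [l2_permAct]
        rw [show permAct (σ t) (φ (cplx (r n))) - φ (alphaC T hc t (cplx (r n)))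
            = -(φ (alphaC T hc t (cplx (r n))) - permAct (σ t) (φ (cplx (r n)))) by abel,
          l2_neg]
        exact ht
      have htri : l2 d ((φ (alphaC T hc (s * t) (cplx (r n)))
              - permAct (σ (s * t)) (φ (cplx (r n))))
            + (permAct (σ (s * t)) (φ (cplx (r n)))
              - permAct (σ s) (permAct (σ t) (φ (cplx (r n)))))
            + permAct (σ s) (permAct (σ t) (φ (cplx (r n)))
              - φ (alphaC T hc t (cplx (r n)))))
          ≤ l2 d (φ (alphaC T hc (s * t) (cplx (r n)))
              - permAct (σ (s * t)) (φ (cplx (r n))))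
            + l2 d (permAct (σ (s * t)) (φ (cplx (r n)))
              - permAct (σ s) (permAct (σ t) (φ (cplx (r n)))))
            + l2 d (permAct (σ s) (permAct (σ t) (φ (cplx (r n)))
              - φ (alphaC T hc t (cplx (r n))))) :=
        (l2_add_le _ _).trans (by gcongr; exact l2_add_le _ _)
      have := hb2.trans (by linarith : 2 * mismQ d σ s t ≤ 2 * c)
      linarith
  | one =>
    constructor
    · simp
    refine ⟨∅, 0, 0, le_rfl, ?_⟩
    intro d σ φ ψ c hc0
    constructor
    · intro _
      simp [map_one, l2_zero]
    · intro s _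
      rw [alphaC_one']
      simp [map_one, permAct_one, l2_zero]
  | mul x y hx hy ihx ihy =>
    classical
    obtain ⟨hnx, Ex, Nx, Lx, hLx, Hx⟩ := ihx
    obtain ⟨hny, Ey, Ny, Ly, hLy, Hy⟩ := ihy
    constructor
    · exact (norm_mul_le x y).trans (by nlinarith [norm_nonneg x, norm_nonneg y])
    refine ⟨Ex ∪ Ey, max Nx Ny, Lx + Ly, by linarith, ?_⟩
    intro d σ φ ψ c hc0
    have hx1 : ∀ k, ‖φ x k‖ ≤ 1 := fun k => (hom_coord_le φ x k).trans hnx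
    have hy1 : ∀ k, ‖ψ y k‖ ≤ 1 := fun k => (hom_coord_le ψ y k).trans hny
    constructor
    · intro hyp
      have hypx : ∀ t ∈ Ex, ∀ n ≤ Nx,
          l2 d (φ (alphaC T hc t (cplx (r n))) - ψ (alphaC T hc t (cplx (r n)))) ≤ c :=
        fun t ht n hn => hyp t (Finset.mem_union_left _ ht) n (hn.trans (le_max_left _ _))
      have hypy : ∀ t ∈ Ey, ∀ n ≤ Ny,
          l2 d (φ (alphaC T hc t (cplx (r n))) - ψ (alphaC T hc t (cplx (r n)))) ≤ c :=
        fun t ht n hn => hyp t (Finset.mem_union_right _ ht) n (hn.trans (le_max_right _ _))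
      have bx := ((Hx d σ φ ψ c hc0).1) hypx
      have by' := ((Hy d σ φ ψ c hc0).1) hypy
      have expand : φ (x * y) - ψ (x * y)
          = φ x * (φ y - ψ y) + (φ x - ψ x) * ψ y := by
        rw [map_mul, map_mul]
        ring
      rw [expand]
      have e1 : l2 d (φ x * (φ y - ψ y)) ≤ 1 * l2 d (φ y - ψ y) := by
        apply l2_scale_mono zero_le_one
        intro k
        rw [Pi.mul_apply, norm_mul]
        exact mul_le_mul_of_nonneg_right (hx1 k) (norm_nonneg _)
      have e2 : l2 d ((φ x - ψ x) * ψ y) ≤ 1 * l2 d (φ x - ψ x) := by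
        apply l2_scale_mono zero_le_one
        intro k
        rw [Pi.mul_apply, norm_mul, mul_comm 1 _]
        exact mul_le_mul_of_nonneg_left (hy1 k) (norm_nonneg _)
      have := l2_add_le (φ x * (φ y - ψ y)) ((φ x - ψ x) * ψ y)
      nlinarith
    · intro s hyp
      have hypx : ∀ t ∈ Ex, (∀ n ≤ Nx, _ ∧ _) ∧ mismQ d σ s t ≤ c := fun t ht =>
        ⟨fun n hn => ⟨((hyp t (Finset.mem_union_left _ ht)).1 n
            (hn.trans (le_max_left _ _))).1,
          ((hyp t (Finset.mem_union_left _ ht)).1 n (hn.trans (le_max_left _ _))).2⟩,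
          (hyp t (Finset.mem_union_left _ ht)).2⟩
      have hypy : ∀ t ∈ Ey, (∀ n ≤ Ny, _ ∧ _) ∧ mismQ d σ s t ≤ c := fun t ht =>
        ⟨fun n hn => ⟨((hyp t (Finset.mem_union_right _ ht)).1 n
            (hn.trans (le_max_right _ _))).1,
          ((hyp t (Finset.mem_union_right _ ht)).1 n (hn.trans (le_max_right _ _))).2⟩,
          (hyp t (Finset.mem_union_right _ ht)).2⟩
      have bx := ((Hx d σ φ ψ c hc0).2) s hypx
      have by' := ((Hy d σ φ ψ c hc0).2) s hypy
      have expand : φ (alphaC T hc s (x * y)) - permAct (σ s) (φ (x * y))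
          = φ (alphaC T hc s x) * (φ (alphaC T hc s y) - permAct (σ s) (φ y))
            + (φ (alphaC T hc s x) - permAct (σ s) (φ x)) * permAct (σ s) (φ y) := by
        rw [alphaC_mul', map_mul, map_mul, permAct_mul]
        ring
      rw [expand]
      have hx1' : ∀ k, ‖φ (alphaC T hc s x) k‖ ≤ 1 := fun k =>
        (hom_coord_le φ _ k).trans ((norm_alphaC_le s x).trans hnx)
      have hy1' : ∀ k, ‖permAct (σ s) (φ y) k‖ ≤ 1 := fun k =>
        (hom_coord_le φ y _).trans hny
      have e1 : l2 d (φ (alphaC T hc s x) * (φ (alphaC T hc s y) - permAct (σ s) (φ y)))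
          ≤ 1 * l2 d (φ (alphaC T hc s y) - permAct (σ s) (φ y)) := by
        apply l2_scale_mono zero_le_one
        intro k
        rw [Pi.mul_apply, norm_mul]
        exact mul_le_mul_of_nonneg_right (hx1' k) (norm_nonneg _)
      have e2 : l2 d ((φ (alphaC T hc s x) - permAct (σ s) (φ x)) * permAct (σ s) (φ y))
          ≤ 1 * l2 d (φ (alphaC T hc s x) - permAct (σ s) (φ x)) := by
        apply l2_scale_mono zero_le_one
        intro k
        rw [Pi.mul_apply, norm_mul, mul_comm 1 _]
        exact mul_le_mul_of_nonneg_left (hy1' k) (norm_nonneg _)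
      have := l2_add_le (φ (alphaC T hc s x) * (φ (alphaC T hc s y) - permAct (σ s) (φ y)))
        ((φ (alphaC T hc s x) - permAct (σ s) (φ x)) * permAct (σ s) (φ y))
      nlinarith

lemma alphaC_zero (s : G) : alphaC T hc s (0 : C(X, ℂ)) = 0 := by
  ext x; rfl

lemma alphaC_add (s : G) (f g : C(X, ℂ)) :
    alphaC T hc s (f + g) = alphaC T hc s f + alphaC T hc s g := by
  ext x; rfl

lemma transfer_of_mem_adjoin
    (hTmul : ∀ s t : G, T (s * t) = T s ∘ T t)
    {r : ℕ → C(X, ℝ)} (hr : ∀ n x, |r n x| ≤ 1) :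
    ∀ g ∈ Algebra.adjoin ℂ (gens T hc r), Transfer T hc r g := by
  intro g hg
  rw [← Subalgebra.mem_toSubmodule, Algebra.adjoin_eq_span] at hg
  induction hg using Submodule.span_induction with
  | mem x hx => exact (transfer_monomial hTmul hr x hx).2
  | zero =>
    refine ⟨∅, 0, 0, le_rfl, ?_⟩
    intro d σ φ ψ c hc0
    constructor
    · intro _
      simp [map_zero, l2_zero]
    · intro s _
      rw [alphaC_zero]
      simp [map_zero, permAct_zero, l2_zero]
  | add x y hx hy ihx ihy =>
    classical
    obtain ⟨Ex, Nx, Lx, hLx, Hx⟩ := ihx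
    obtain ⟨Ey, Ny, Ly, hLy, Hy⟩ := ihy
    refine ⟨Ex ∪ Ey, max Nx Ny, Lx + Ly, by linarith, ?_⟩
    intro d σ φ ψ c hc0
    constructor
    · intro hyp
      have bx := ((Hx d σ φ ψ c hc0).1) fun t ht n hn =>
        hyp t (Finset.mem_union_left _ ht) n (hn.trans (le_max_left _ _))
      have by' := ((Hy d σ φ ψ c hc0).1) fun t ht n hn =>
        hyp t (Finset.mem_union_right _ ht) n (hn.trans (le_max_right _ _))
      have expand : φ (x + y) - ψ (x + y) = (φ x - ψ x) + (φ y - ψ y) := by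
        rw [map_add, map_add]
        abel
      rw [expand]
      have := l2_add_le (φ x - ψ x) (φ y - ψ y)
      linarith
    · intro s hyp
      have hypx := fun t ht => hyp t (Finset.mem_union_left Ey ht)
      have hypy := fun t ht => hyp t (Finset.mem_union_right Ex ht)
      have bx := ((Hx d σ φ ψ c hc0).2) s fun t ht =>
        ⟨fun n hn => (hypx t ht).1 n (hn.trans (le_max_left _ _)), (hypx t ht).2⟩
      have by' := ((Hy d σ φ ψ c hc0).2) s fun t ht =>
        ⟨fun n hn => (hypy t ht).1 n (hn.trans (le_max_right _ _)), (hypy t ht).2⟩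
      have expand : φ (alphaC T hc s (x + y)) - permAct (σ s) (φ (x + y))
          = (φ (alphaC T hc s x) - permAct (σ s) (φ x))
            + (φ (alphaC T hc s y) - permAct (σ s) (φ y)) := by
        rw [alphaC_add, map_add, map_add, permAct_add]
        abel
      rw [expand]
      have := l2_add_le (φ (alphaC T hc s x) - permAct (σ s) (φ x))
        (φ (alphaC T hc s y) - permAct (σ s) (φ y))
      linarith
  | smul a x hx ihx =>
    obtain ⟨Ex, Nx, Lx, hLx, Hx⟩ := ihx
    refine ⟨Ex, Nx, ‖a‖ * Lx, by positivity, ?_⟩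
    intro d σ φ ψ c hc0
    constructor
    · intro hyp
      have bx := ((Hx d σ φ ψ c hc0).1) hyp
      have expand : φ (a • x) - ψ (a • x) = a • (φ x - ψ x) := by
        rw [_root_.map_smul, _root_.map_smul, smul_sub]
      rw [expand, l2_smul, mul_assoc]
      exact mul_le_mul_of_nonneg_left bx (norm_nonneg a)
    · intro s hyp
      have bx := ((Hx d σ φ ψ c hc0).2) s hyp
      have expand : φ (alphaC T hc s (a • x)) - permAct (σ s) (φ (a • x))
          = a • (φ (alphaC T hc s x) - permAct (σ s) (φ x)) := by
        rw [alphaC_smul, _root_.map_smul, _root_.map_smul, permAct_smul, smul_sub]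
      rw [expand, l2_smul, mul_assoc]
      exact mul_le_mul_of_nonneg_left bx (norm_nonneg a)

/-- Stone–Weierstrass via dynamical generation: every continuous function is
approximated by elements of the invariant algebra generated by the sequence. -/
lemma exists_transfer_approx
    (hT1 : T 1 = id) (hTmul : ∀ s t : G, T (s * t) = T s ∘ T t)
    {r : ℕ → C(X, ℝ)} (hgen : DynGenTop T hc r) (hr : ∀ n x, |r n x| ≤ 1)
    (f : C(X, ℂ)) {η : ℝ} (hη : 0 < η) :
    ∃ g, ‖f - g‖ < η ∧ Transfer T hc r g := by
  have hstar : star (gens T hc r) = gens T hc r := by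
    ext x
    rw [Set.mem_star]
    constructor
    · rintro ⟨s, n, hx⟩
      have : x = star (star x) := (star_star x).symm
      rw [this, hx, ← cplx_star (r n), ← alphaC_star, star_star]
      exact ⟨s, n, rfl⟩
    · rintro ⟨s, n, hx⟩
      rw [hx, ← alphaC_star]
      refine ⟨s, n, ?_⟩
      rw [cplx_star]
  set A := StarAlgebra.adjoin ℂ (gens T hc r) with hA
  have hAsub : A.toSubalgebra = Algebra.adjoin ℂ (gens T hc r) := by
    rw [hA, StarAlgebra.adjoin_toSubalgebra, hstar, Set.union_self]
  set B := A.topologicalClosure with hB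
  have hBclosed : IsClosed (B : Set C(X, ℂ)) := StarSubalgebra.isClosed_topologicalClosure A
  have hcont : ∀ s : G, Continuous (alphaC T hc s) := by
    intro s
    apply (LipschitzWith.of_dist_le_mul (K := 1) ?_).continuous
    intro f g
    rw [dist_eq_norm, dist_eq_norm, NNReal.coe_one, one_mul]
    calc ‖alphaC T hc s f - alphaC T hc s g‖ = ‖alphaC T hc s (f - g)‖ := by
          rw [alphaC_sub]
      _ ≤ ‖f - g‖ := norm_alphaC_le s _
  have hAinv : ∀ (s : G) (g : C(X, ℂ)), g ∈ A → alphaC T hc s g ∈ A := by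
    intro s g hg
    induction hg using StarAlgebra.adjoin_induction with
    | mem x hx =>
      apply StarAlgebra.subset_adjoin
      obtain ⟨t, n, rfl⟩ := hx
      rw [alphaC_comp hTmul]
      exact ⟨s * t, n, rfl⟩
    | algebraMap c =>
      have : alphaC T hc s ((algebraMap ℂ C(X, ℂ)) c) = (algebraMap ℂ C(X, ℂ)) c := by
        ext x; rfl
      rw [this]
      exact Subalgebra.algebraMap_mem _ c
    | add x y hx hy ihx ihy =>
      rw [alphaC_add]
      exact add_mem ihx ihy
    | mul x y hx hy ihx ihy =>
      rw [alphaC_mul']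
      exact mul_mem ihx ihy
    | star x hx ihx =>
      rw [alphaC_star]
      exact star_mem ihx
  have hBinv : ∀ (s : G) (g : C(X, ℂ)), g ∈ B → alphaC T hc s g ∈ B := by
    intro s g hg
    have h1 : (B : Set C(X, ℂ)) = closure (A : Set C(X, ℂ)) :=
      StarSubalgebra.topologicalClosure_coe A
    have h2 : g ∈ closure (A : Set C(X, ℂ)) := by rw [← h1]; exact hg
    have h3 : alphaC T hc s g ∈ closure (alphaC T hc s '' (A : Set C(X, ℂ))) :=
      image_closure_subset_closure_image (hcont s) ⟨g, h2, rfl⟩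
    have h4 : closure (alphaC T hc s '' (A : Set C(X, ℂ)))
        ⊆ closure (A : Set C(X, ℂ)) := by
      apply closure_mono
      rintro _ ⟨u, hu, rfl⟩
      exact hAinv s u hu
    show alphaC T hc s g ∈ (B : Set C(X, ℂ))
    rw [h1]
    exact h4 h3
  have hBmem : ∀ n, cplx (r n) ∈ B := by
    intro n
    apply StarSubalgebra.le_topologicalClosure A
    have : cplx (r n) = alphaC T hc 1 (cplx (r n)) := (alphaC_one hT1 _).symm
    rw [this]
    exact StarAlgebra.subset_adjoin ℂ _ ⟨1, n, rfl⟩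
  have hBtop : B = ⊤ := hgen B hBclosed hBinv hBmem
  have hfB : f ∈ closure (A : Set C(X, ℂ)) := by
    rw [← StarSubalgebra.topologicalClosure_coe A]
    show f ∈ (B : Set C(X, ℂ))
    rw [hBtop]
    trivial
  rw [Metric.mem_closure_iff] at hfB
  obtain ⟨g, hgA, hdist⟩ := hfB η hη
  refine ⟨g, by rwa [← dist_eq_norm], ?_⟩
  apply transfer_of_mem_adjoin hTmul hr
  rw [← hAsub]
  exact StarSubalgebra.mem_toSubalgebra.mpr hgA

end Transfer




section Assembly

variable {T : G → X → X} {hc : ∀ s, Continuous (T s)}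

lemma summable_half_mul {f : ℕ → ℝ} (h0 : ∀ n, 0 ≤ f n) (h2 : ∀ n, f n ≤ 2) :
    Summable (fun n => (1 / 2 : ℝ) ^ (n + 1) * f n) := by
  refine Summable.of_nonneg_of_le (fun n => mul_nonneg (by positivity) (h0 n)) (fun n => ?_) summable_geometric_two
  calc (1 / 2 : ℝ) ^ (n + 1) * f n ≤ (1 / 2 : ℝ) ^ (n + 1) * 2 :=
        mul_le_mul_of_nonneg_left (h2 n) (by positivity)
    _ = (1 / 2 : ℝ) ^ n := by ring

lemma tsum_half_mul_le {f : ℕ → ℝ} (h0 : ∀ n, 0 ≤ f n) (h2 : ∀ n, f n ≤ 2) (N : ℕ) :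
    (∑' n, (1 / 2 : ℝ) ^ (n + 1) * f n)
      ≤ (∑ n ∈ Finset.range N, (1 / 2 : ℝ) ^ (n + 1) * f n) + (1 / 2) ^ N * 2 := by
  have hs := summable_half_mul h0 h2
  rw [← Summable.sum_add_tsum_nat_add N hs]
  gcongr
  have hgeo : Summable (fun n : ℕ => (1 / 2 : ℝ) ^ (n + N + 1) * 2) := by
    have he : (fun n : ℕ => (1 / 2 : ℝ) ^ (n + N + 1) * 2)
        = fun n : ℕ => ((1 / 2 : ℝ) ^ (N + 1) * 2) * (1 / 2) ^ n := by
      funext n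
      rw [show n + N + 1 = n + (N + 1) by omega, pow_add]
      ring
    rw [he]
    exact summable_geometric_two.mul_left _
  calc (∑' n : ℕ, (1 / 2 : ℝ) ^ (n + N + 1) * f (n + N))
      ≤ ∑' n : ℕ, (1 / 2 : ℝ) ^ (n + N + 1) * 2 := by
        refine Summable.tsum_le_tsum (fun n => ?_) ((summable_nat_add_iff N).mpr hs) hgeo
        exact mul_le_mul_of_nonneg_left (h2 _) (by positivity)
    _ = (1 / 2) ^ N * 2 := by
        have he : ∀ n : ℕ, (1 / 2 : ℝ) ^ (n + N + 1) * 2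
            = ((1 / 2 : ℝ) ^ (N + 1) * 2) * (1 / 2) ^ n := by
          intro n
          rw [show n + N + 1 = n + (N + 1) by omega, pow_add]
          ring
        rw [tsum_congr he, tsum_mul_left, tsum_geometric_two, pow_succ]
        ring

lemma single_le_tsum_half {f : ℕ → ℝ} (h0 : ∀ n, 0 ≤ f n) (h2 : ∀ n, f n ≤ 2) (n : ℕ) :
    (1 / 2 : ℝ) ^ (n + 1) * f n ≤ ∑' n, (1 / 2 : ℝ) ^ (n + 1) * f n :=
  Summable.le_tsum (summable_half_mul h0 h2) n (fun j _ => mul_nonneg (by positivity) (h0 j))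

lemma sum_pow_half_le_one (N : ℕ) : (∑ n ∈ Finset.range N, (1 / 2 : ℝ) ^ (n + 1)) ≤ 1 := by
  have he : (∑ n ∈ Finset.range N, (1 / 2 : ℝ) ^ (n + 1))
      = (1 / 2) * ∑ n ∈ Finset.range N, (1 / 2 : ℝ) ^ n := by
    rw [Finset.mul_sum]
    refine Finset.sum_congr rfl fun n _ => ?_
    rw [pow_succ]
    ring
  have h2 : (∑ n ∈ Finset.range N, (1 / 2 : ℝ) ^ n) ≤ 2 := by
    have := Summable.sum_le_tsum (Finset.range N) (fun n _ => by positivity) summable_geometric_two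
    rwa [tsum_geometric_two] at this
  rw [he]
  linarith

variable [CompactSpace X] [Nonempty X]

lemma l2_hom_le {d : ℕ} (φ : C(X, ℂ) →ₐ[ℂ] (Fin d → ℂ)) (u : C(X, ℂ)) :
    l2 d (φ u) ≤ ‖u‖ :=
  (l2_le_linf _).trans (linf_le (norm_nonneg u) (hom_coord_le φ u))

lemma l2_defect_le_two {d : ℕ} {r : ℕ → C(X, ℝ)} (hr : ∀ n x, |r n x| ≤ 1)
    (σ : G → Equiv.Perm (Fin d)) (φ : C(X, ℂ) →ₐ[ℂ] (Fin d → ℂ)) (u : G) (n : ℕ) :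
    l2 d (φ (alphaC T hc u (cplx (r n))) - permAct (σ u) (φ (cplx (r n)))) ≤ 2 := by
  have h1 : l2 d (φ (alphaC T hc u (cplx (r n)))) ≤ 1 :=
    (l2_hom_le φ _).trans ((norm_alphaC_le u _).trans (norm_cplx_le (hr n)))
  have h2 : l2 d (permAct (σ u) (φ (cplx (r n)))) ≤ 1 := by
    rw [l2_permAct]
    exact (l2_hom_le φ _).trans (norm_cplx_le (hr n))
  have := l2_sub_le (φ (alphaC T hc u (cplx (r n)))) (permAct (σ u) (φ (cplx (r n))))
  linarith

lemma l2_diff_le_two {d : ℕ} {r : ℕ → C(X, ℝ)} (hr : ∀ n x, |r n x| ≤ 1)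
    (φ ψ : C(X, ℂ) →ₐ[ℂ] (Fin d → ℂ)) (n : ℕ) :
    l2 d (φ (cplx (r n)) - ψ (cplx (r n))) ≤ 2 := by
  have h1 : l2 d (φ (cplx (r n))) ≤ 1 := (l2_hom_le φ _).trans (norm_cplx_le (hr n))
  have h2 : l2 d (ψ (cplx (r n))) ≤ 1 := (l2_hom_le ψ _).trans (norm_cplx_le (hr n))
  have := l2_sub_le (φ (cplx (r n))) (ψ (cplx (r n)))
  linarith

lemma defect_le_of_homtop {d : ℕ} {r : ℕ → C(X, ℝ)} (hr : ∀ n x, |r n x| ≤ 1)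
    {F : Finset G} {δ : ℝ} {σ : G → Equiv.Perm (Fin d)}
    {φ : C(X, ℂ) →ₐ[ℂ] (Fin d → ℂ)} (hφ : φ ∈ HomTop T hc r F δ σ)
    {u : G} (hu : u ∈ F) (n : ℕ) :
    l2 d (φ (alphaC T hc u (cplx (r n))) - permAct (σ u) (φ (cplx (r n)))) ≤ 2 ^ (n + 1) * δ := by
  have h1 := single_le_tsum_half (f := fun n =>
      l2 d (φ (alphaC T hc u (cplx (r n))) - permAct (σ u) (φ (cplx (r n)))))
    (fun n => l2_nonneg _) (fun n => l2_defect_le_two hr σ φ u n) n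
  have h3 : (1 / 2 : ℝ) ^ (n + 1) *
      l2 d (φ (alphaC T hc u (cplx (r n))) - permAct (σ u) (φ (cplx (r n)))) ≤ δ :=
    h1.trans (hφ u hu).le
  have h5 : ((1 : ℝ) / 2) ^ (n + 1) = (((2 : ℝ) ^ (n + 1))⁻¹ : ℝ) := by
    rw [one_div, inv_pow]
  rw [h5, inv_mul_le_iff₀ (by positivity)] at h3
  exact h3

lemma rho_term_le {d : ℕ} {r : ℕ → C(X, ℝ)} (hr : ∀ n x, |r n x| ≤ 1)
    (φ ψ : C(X, ℂ) →ₐ[ℂ] (Fin d → ℂ)) (n : ℕ) :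
    l2 d (φ (cplx (r n)) - ψ (cplx (r n))) ≤ 2 ^ (n + 1) * rhoSeqC r φ ψ := by
  have h1 := single_le_tsum_half (f := fun n => l2 d (φ (cplx (r n)) - ψ (cplx (r n))))
    (fun n => l2_nonneg _) (fun n => l2_diff_le_two hr φ ψ n) n
  have h3 : (1 / 2 : ℝ) ^ (n + 1) * l2 d (φ (cplx (r n)) - ψ (cplx (r n)))
      ≤ rhoSeqC r φ ψ := h1
  have h5 : ((1 : ℝ) / 2) ^ (n + 1) = (((2 : ℝ) ^ (n + 1))⁻¹ : ℝ) := by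
    rw [one_div, inv_pow]
  rw [h5, inv_mul_le_iff₀ (by positivity)] at h3
  exact h3

lemma homTop_mono {d : ℕ} {r : ℕ → C(X, ℝ)} {F F' : Finset G} {δ δ' : ℝ}
    {σ : G → Equiv.Perm (Fin d)} (hF : F ⊆ F') (hδ : δ' ≤ δ) :
    HomTop T hc r F' δ' σ ⊆ HomTop T hc r F δ σ :=
  fun φ hφ s hs => (hφ s (hF hs)).trans_le hδ

lemma mismQ_eventually (SA : SoficApprox G) (s t : G) {c : ℝ} (hcpos : 0 < c) :
    ∀ᶠ i in atTop, mismQ (SA.d i) (SA.σ i) s t ≤ c := by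
  have h1 := SA.approx_mul s t
  have key : ∀ i, ((({k : Fin (SA.d i) | SA.σ i (s * t) k ≠ SA.σ i s (SA.σ i t k)} :
      Set (Fin (SA.d i))).ncard : ℝ)) / (SA.d i)
      = 1 - ((({k : Fin (SA.d i) | SA.σ i (s * t) k = SA.σ i s (SA.σ i t k)} :
      Set (Fin (SA.d i))).ncard : ℝ)) / (SA.d i) := by
    intro i
    have hco : ({k : Fin (SA.d i) | SA.σ i (s * t) k = SA.σ i s (SA.σ i t k)} :
        Set (Fin (SA.d i)))ᶜ
        = {k : Fin (SA.d i) | SA.σ i (s * t) k ≠ SA.σ i s (SA.σ i t k)} := by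
      ext k
      simp [Set.mem_compl_iff]
    have hadd := Set.ncard_add_ncard_compl
      ({k : Fin (SA.d i) | SA.σ i (s * t) k = SA.σ i s (SA.σ i t k)} : Set (Fin (SA.d i)))
    rw [hco] at hadd
    have hdpos : (0 : ℝ) < SA.d i := by exact_mod_cast SA.d_pos i
    have hcard : (Nat.card (Fin (SA.d i)) : ℝ) = SA.d i := by simp
    have : (({k : Fin (SA.d i) | SA.σ i (s * t) k = SA.σ i s (SA.σ i t k)} :
        Set (Fin (SA.d i))).ncard : ℝ)
        + (({k : Fin (SA.d i) | SA.σ i (s * t) k ≠ SA.σ i s (SA.σ i t k)} :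
        Set (Fin (SA.d i))).ncard : ℝ) = SA.d i := by
      rw [← hcard]
      exact_mod_cast hadd
    field_simp
    linarith
  have h2 : Tendsto (fun i => ((({k : Fin (SA.d i) | SA.σ i (s * t) k ≠ SA.σ i s (SA.σ i t k)} :
      Set (Fin (SA.d i))).ncard : ℝ)) / (SA.d i)) atTop (nhds 0) := by
    simp only [key]
    have := tendsto_const_nhds (x := (1 : ℝ)) (f := atTop (α := ℕ)) |>.sub h1
    simpa using this
  have h3 : Tendsto (fun i => mismQ (SA.d i) (SA.σ i) s t) atTop (nhds 0) := by
    have := h2.sqrt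
    rw [Real.sqrt_zero] at this
    exact this
  have h4 := h3.eventually_lt_const hcpos
  exact h4.mono fun i hi => hi.le

end Assembly


section Main

variable {T : G → X → X} {hc : ∀ s, Continuous (T s)}
variable [CompactSpace X] [Nonempty X]

lemma l2_add3_le {d : ℕ} (a b c : Fin d → ℂ) :
    l2 d (a + b + c) ≤ l2 d a + l2 d b + l2 d c := by
  have h1 := l2_add_le (a + b) c
  have h2 := l2_add_le a b
  linarith

lemma hTop_le_hTop
    (hT1 : T 1 = id) (hTmul : ∀ s t : G, T (s * t) = T s ∘ T t)
    (SA : SoficApprox G)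
    {p q : ℕ → C(X, ℝ)}
    (hp : ∀ n x, |p n x| ≤ 1) (hq : ∀ n x, |q n x| ≤ 1)
    (hgenp : DynGenTop T hc p) (hgenq : DynGenTop T hc q) :
    hTop T hc SA q ≤ hTop T hc SA p := by
  classical
  unfold hTop
  apply iSup_le
  rintro ⟨ε, hε⟩
  obtain ⟨N, hN⟩ : ∃ N : ℕ, (1 / 2 : ℝ) ^ N * 2 ≤ ε / 4 := by
    obtain ⟨N, hN⟩ := exists_pow_lt_of_lt_one
      (show (0 : ℝ) < ε / 8 by linarith) (by norm_num : (1 / 2 : ℝ) < 1)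
    exact ⟨N, by linarith⟩
  set η := ε / 8 with hηdef
  have hη0 : 0 < η := by rw [hηdef]; linarith
  have Happrox : ∀ n : ℕ, ∃ gg, ‖cplx (q n) - gg‖ < η ∧ Transfer T hc p gg :=
    fun n => exists_transfer_approx hT1 hTmul hgenp hp _ hη0
  choose g hgnorm hgtr using Happrox
  choose Eg Ng Lg hLg Hg using hgtr
  set Np := (Finset.range N).sup Ng with hNpdef
  set Emax := (Finset.range N).biUnion Eg with hEmaxdef
  set Lmax := 1 + ∑ n ∈ Finset.range N, Lg n with hLmaxdef
  have hLsum0 : 0 ≤ ∑ n ∈ Finset.range N, Lg n := Finset.sum_nonneg fun n _ => hLg n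
  have hLmax0 : 0 < Lmax := by rw [hLmaxdef]; linarith
  have hLg_le : ∀ n ∈ Finset.range N, Lg n ≤ Lmax := by
    intro n hn
    have := Finset.single_le_sum (f := Lg) (fun m _ => hLg m) hn
    rw [hLmaxdef]
    linarith
  set ε' := ε / (4 * Lmax * 2 ^ (Np + 2)) with hε'def
  have hpos4 : (0 : ℝ) < 4 * Lmax * 2 ^ (Np + 2) :=
    mul_pos (mul_pos (by norm_num) hLmax0) (by positivity)
  have hε'0 : 0 < ε' := div_pos hε hpos4
  apply le_iSup_of_le ⟨ε', hε'0⟩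
  apply le_iInf
  rintro ⟨F', hF'⟩
  apply le_iInf
  rintro ⟨δ', hδ'0⟩
  set F'' := F' ∪ Emax with hF''def
  have hF''ne : F''.Nonempty := by
    obtain ⟨x, hx⟩ := hF'
    exact ⟨x, Finset.mem_union_left _ hx⟩
  set δ'' := min δ' (ε' / 2) with hδ''def
  have hδ''0 : 0 < δ'' := lt_min hδ'0 (by linarith)
  have hδ''le : δ'' ≤ δ' := min_le_left _ _
  have hδ''le2 : δ'' ≤ ε' / 2 := min_le_right _ _
  obtain ⟨M, hM⟩ : ∃ M : ℕ, (1 / 2 : ℝ) ^ M * 2 ≤ δ'' / 4 := by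
    obtain ⟨M, hM⟩ := exists_pow_lt_of_lt_one
      (show (0 : ℝ) < δ'' / 8 by linarith) (by norm_num : (1 / 2 : ℝ) < 1)
    exact ⟨M, by linarith⟩
  set θ := δ'' / 8 with hθdef
  have hθ0 : 0 < θ := by rw [hθdef]; linarith
  have Happrox2 : ∀ m : ℕ, ∃ hh, ‖cplx (p m) - hh‖ < θ ∧ Transfer T hc q hh :=
    fun m => exists_transfer_approx hT1 hTmul hgenq hq _ hθ0
  choose h hhnorm hhtr using Happrox2
  choose Eh Nh Lh hLh Hh using hhtr
  set N'all := (Finset.range M).sup Nh with hN'alldef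
  set E'all := (Finset.range M).biUnion Eh with hE'alldef
  set L'max := 1 + ∑ m ∈ Finset.range M, Lh m with hL'maxdef
  have hL'sum0 : 0 ≤ ∑ m ∈ Finset.range M, Lh m := Finset.sum_nonneg fun m _ => hLh m
  have hL'max0 : 0 < L'max := by rw [hL'maxdef]; linarith
  set c₁ := δ'' / (4 * L'max) with hc₁def
  have hc₁0 : 0 < c₁ := div_pos hδ''0 (by linarith)
  set δq := c₁ / 2 ^ (N'all + 1) with hδqdef
  have hδq0 : 0 < δq := div_pos hc₁0 (by positivity)
  set F : Finset G := (F'' ∪ E'all) ∪ Finset.image₂ (· * ·) F'' E'all with hFdef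
  have hFne : F.Nonempty := by
    obtain ⟨x, hx⟩ := hF''ne
    exact ⟨x, Finset.mem_union_left _ (Finset.mem_union_left _ hx)⟩
  -- the chain of three inequalities
  have key2 : limsup (fun i => ((((SA.d i : ℝ))⁻¹ : ℝ) : EReal) *
        elog (sepNum (HomTop T hc p F'' δ'' (SA.σ i)) (rhoSeqC p) ε')) atTop
      ≤ limsup (fun i => ((((SA.d i : ℝ))⁻¹ : ℝ) : EReal) *
        elog (sepNum (HomTop T hc p F' δ' (SA.σ i)) (rhoSeqC p) ε')) atTop := by
    have hev : ∀ i : ℕ, ((((SA.d i : ℝ))⁻¹ : ℝ) : EReal) *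
          elog (sepNum (HomTop T hc p F'' δ'' (SA.σ i)) (rhoSeqC p) ε')
        ≤ ((((SA.d i : ℝ))⁻¹ : ℝ) : EReal) *
          elog (sepNum (HomTop T hc p F' δ' (SA.σ i)) (rhoSeqC p) ε') := by
      intro i
      apply mul_le_mul_of_nonneg_left _ (by
        apply EReal.coe_nonneg.mpr
        positivity)
      apply elog_mono
      exact sepNum_le_sepNum
        (homTop_mono (Finset.subset_union_left) hδ''le) (fun x _ y _ _ hxy => hxy)
    exact limsup_le_limsup (Eventually.of_forall hev)
  have key1 : limsup (fun i => ((((SA.d i : ℝ))⁻¹ : ℝ) : EReal) *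
        elog (sepNum (HomTop T hc q F δq (SA.σ i)) (rhoSeqC q) ε)) atTop
      ≤ limsup (fun i => ((((SA.d i : ℝ))⁻¹ : ℝ) : EReal) *
        elog (sepNum (HomTop T hc p F'' δ'' (SA.σ i)) (rhoSeqC p) ε')) atTop := by
    clear key2
    have hmism : ∀ᶠ i in atTop, ∀ s ∈ F'', ∀ t ∈ E'all,
        mismQ (SA.d i) (SA.σ i) s t ≤ c₁ := by
      have hbig := (eventually_all_finite (F''.finite_toSet)).mpr
        (fun s _ => (eventually_all_finite (E'all.finite_toSet)).mpr
          (fun t _ => mismQ_eventually SA s t hc₁0))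
      exact hbig.mono fun i hh s hs t ht =>
        hh s (Finset.mem_coe.mpr hs) t (Finset.mem_coe.mpr ht)
    refine limsup_le_limsup ?_
    filter_upwards [hmism] with i hi
    apply mul_le_mul_of_nonneg_left _ (by
      apply EReal.coe_nonneg.mpr
      positivity)
    apply elog_mono
    -- the inclusion Hom(q,F,δq) ⊆ Hom(p,F'',δ'')
    have hinc : HomTop T hc q F δq (SA.σ i) ⊆ HomTop T hc p F'' δ'' (SA.σ i) := by
      intro φ hφ
      intro s hs
      have hdefq : ∀ u ∈ F, ∀ n, n ≤ N'all →
          l2 (SA.d i) (φ (alphaC T hc u (cplx (q n)))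
            - permAct (SA.σ i u) (φ (cplx (q n)))) ≤ c₁ := by
        intro u hu n hn
        refine (defect_le_of_homtop hq hφ hu n).trans ?_
        have hpow : (2 : ℝ) ^ (n + 1) ≤ 2 ^ (N'all + 1) :=
          pow_le_pow_right₀ one_le_two (by omega)
        have heq : (2 : ℝ) ^ (N'all + 1) * δq = c₁ := by
          rw [hδqdef]
          field_simp
        calc (2 : ℝ) ^ (n + 1) * δq ≤ 2 ^ (N'all + 1) * δq :=
              mul_le_mul_of_nonneg_right hpow hδq0.le
          _ = c₁ := heq
      have hdefp : ∀ m, m < M →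
          l2 (SA.d i) (φ (alphaC T hc s (cplx (p m)))
            - permAct (SA.σ i s) (φ (cplx (p m)))) ≤ 2 * θ + Lh m * c₁ := by
        intro m hm
        have hexp : φ (alphaC T hc s (cplx (p m))) - permAct (SA.σ i s) (φ (cplx (p m)))
            = φ (alphaC T hc s (cplx (p m) - h m))
              + (φ (alphaC T hc s (h m)) - permAct (SA.σ i s) (φ (h m)))
              + permAct (SA.σ i s) (φ (h m - cplx (p m))) := by
          simp only [alphaC_sub, map_sub, permAct_sub]
          abel
        rw [hexp]
        have t1 : l2 (SA.d i) (φ (alphaC T hc s (cplx (p m) - h m))) ≤ θ :=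
          (l2_hom_le φ _).trans ((norm_alphaC_le s _).trans (hhnorm m).le)
        have t3 : l2 (SA.d i) (permAct (SA.σ i s) (φ (h m - cplx (p m)))) ≤ θ := by
          rw [l2_permAct]
          refine (l2_hom_le φ _).trans ?_
          rw [norm_sub_rev]
          exact (hhnorm m).le
        have t2 : l2 (SA.d i) (φ (alphaC T hc s (h m))
            - permAct (SA.σ i s) (φ (h m))) ≤ Lh m * c₁ := by
          apply ((Hh m (SA.d i) (SA.σ i) φ φ c₁ hc₁0.le).2) s
          intro t ht
          have htE : t ∈ E'all := Finset.mem_biUnion.mpr ⟨m, Finset.mem_range.mpr hm, ht⟩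
          refine ⟨fun n hn => ?_, hi s hs t htE⟩
          have hnle : n ≤ N'all := hn.trans (Finset.le_sup (Finset.mem_range.mpr hm))
          constructor
          · apply hdefq (s * t) _ n hnle
            exact Finset.mem_union_right _ (Finset.mem_image₂_of_mem hs htE)
          · apply hdefq t _ n hnle
            exact Finset.mem_union_left _ (Finset.mem_union_right _ htE)
        have htri := l2_add3_le (φ (alphaC T hc s (cplx (p m) - h m)))
          (φ (alphaC T hc s (h m)) - permAct (SA.σ i s) (φ (h m)))
          (permAct (SA.σ i s) (φ (h m - cplx (p m))))
        linarith
      show (∑' n : ℕ, (1 / 2 : ℝ) ^ (n + 1) *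
          l2 (SA.d i) (φ (alphaC T hc s (cplx (p n)))
            - permAct (SA.σ i s) (φ (cplx (p n))))) < δ''
      have hbound := tsum_half_mul_le (f := fun n =>
          l2 (SA.d i) (φ (alphaC T hc s (cplx (p n)))
            - permAct (SA.σ i s) (φ (cplx (p n)))))
        (fun n => l2_nonneg _) (fun n => l2_defect_le_two hp (SA.σ i) φ s n) M
      have hhead : (∑ m ∈ Finset.range M, (1 / 2 : ℝ) ^ (m + 1) *
          l2 (SA.d i) (φ (alphaC T hc s (cplx (p m)))
            - permAct (SA.σ i s) (φ (cplx (p m)))))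
          ≤ ∑ m ∈ Finset.range M, (1 / 2 : ℝ) ^ (m + 1) * (2 * θ + Lh m * c₁) := by
        refine Finset.sum_le_sum fun m hm => ?_
        exact mul_le_mul_of_nonneg_left (hdefp m (Finset.mem_range.mp hm)) (by positivity)
      have hsplit : (∑ m ∈ Finset.range M, (1 / 2 : ℝ) ^ (m + 1) * (2 * θ + Lh m * c₁))
          = (∑ m ∈ Finset.range M, (1 / 2 : ℝ) ^ (m + 1) * (2 * θ))
            + ∑ m ∈ Finset.range M, (1 / 2 : ℝ) ^ (m + 1) * (Lh m * c₁) := by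
        rw [← Finset.sum_add_distrib]
        refine Finset.sum_congr rfl fun m _ => by ring
      have hb1 : (∑ m ∈ Finset.range M, (1 / 2 : ℝ) ^ (m + 1) * (2 * θ)) ≤ 2 * θ := by
        rw [← Finset.sum_mul]
        calc (∑ m ∈ Finset.range M, (1 / 2 : ℝ) ^ (m + 1)) * (2 * θ)
            ≤ 1 * (2 * θ) :=
              mul_le_mul_of_nonneg_right (sum_pow_half_le_one M) (by linarith)
          _ = 2 * θ := one_mul _
      have hb2 : (∑ m ∈ Finset.range M, (1 / 2 : ℝ) ^ (m + 1) * (Lh m * c₁))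
          ≤ L'max * c₁ := by
        have step1 : (∑ m ∈ Finset.range M, (1 / 2 : ℝ) ^ (m + 1) * (Lh m * c₁))
            ≤ ∑ m ∈ Finset.range M, Lh m * c₁ := by
          refine Finset.sum_le_sum fun m _ => ?_
          exact mul_le_of_le_one_left (mul_nonneg (hLh m) hc₁0.le)
            (pow_le_one₀ (by norm_num) (by norm_num))
        refine step1.trans ?_
        rw [← Finset.sum_mul]
        refine mul_le_mul_of_nonneg_right ?_ hc₁0.le
        rw [hL'maxdef]
        linarith
      have hLc : L'max * c₁ = δ'' / 4 := by
        rw [hc₁def]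
        field_simp
      have hθ4 : 2 * θ = δ'' / 4 := by rw [hθdef]; ring
      calc (∑' n : ℕ, (1 / 2 : ℝ) ^ (n + 1) *
          l2 (SA.d i) (φ (alphaC T hc s (cplx (p n)))
            - permAct (SA.σ i s) (φ (cplx (p n)))))
          ≤ (∑ m ∈ Finset.range M, (1 / 2 : ℝ) ^ (m + 1) *
              l2 (SA.d i) (φ (alphaC T hc s (cplx (p m)))
                - permAct (SA.σ i s) (φ (cplx (p m))))) + (1 / 2) ^ M * 2 := hbound
        _ ≤ (2 * θ + L'max * c₁) + δ'' / 4 := by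
            have := hhead.trans (le_of_eq hsplit)
            linarith [hb1, hb2, hM]
        _ < δ'' := by
            rw [hθ4, hLc]
            linarith
    -- separation transfer and conclusion
    refine sepNum_le_sepNum hinc ?_
    intro φ hφ ψ hψ hne hgt
    by_contra hcon
    push_neg at hcon
    have hφp := hinc hφ
    have hψp := hinc hψ
    suffices hle : rhoSeqC q φ ψ ≤ ε by exact absurd hgt (not_lt.mpr hle)
    set c₂ := (2 : ℝ) ^ (Np + 1) * (ε' + 2 * δ'') with hc₂def
    have hc₂0 : 0 ≤ c₂ := mul_nonneg (by positivity) (by linarith)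
    have hdiff : ∀ t ∈ Emax, ∀ m, m ≤ Np →
        l2 (SA.d i) (φ (alphaC T hc t (cplx (p m))) - ψ (alphaC T hc t (cplx (p m)))) ≤ c₂ := by
      intro t ht m hm
      have htF'' : t ∈ F'' := Finset.mem_union_right _ ht
      have hexp : φ (alphaC T hc t (cplx (p m))) - ψ (alphaC T hc t (cplx (p m)))
          = (φ (alphaC T hc t (cplx (p m))) - permAct (SA.σ i t) (φ (cplx (p m))))
            + permAct (SA.σ i t) (φ (cplx (p m)) - ψ (cplx (p m)))
            + (-(ψ (alphaC T hc t (cplx (p m))) - permAct (SA.σ i t) (ψ (cplx (p m))))) := by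
        simp only [permAct_sub]
        abel
      rw [hexp]
      have d1 := defect_le_of_homtop hp hφp htF'' m
      have d2 := defect_le_of_homtop hp hψp htF'' m
      have dmid : l2 (SA.d i) (permAct (SA.σ i t) (φ (cplx (p m)) - ψ (cplx (p m))))
          ≤ 2 ^ (m + 1) * ε' := by
        rw [l2_permAct]
        refine (rho_term_le hp φ ψ m).trans ?_
        exact mul_le_mul_of_nonneg_left hcon (by positivity)
      have htri := l2_add3_le
        (φ (alphaC T hc t (cplx (p m))) - permAct (SA.σ i t) (φ (cplx (p m))))
        (permAct (SA.σ i t) (φ (cplx (p m)) - ψ (cplx (p m))))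
        (-(ψ (alphaC T hc t (cplx (p m))) - permAct (SA.σ i t) (ψ (cplx (p m)))))
      rw [l2_neg] at htri
      have hpowm : (2 : ℝ) ^ (m + 1) ≤ 2 ^ (Np + 1) :=
        pow_le_pow_right₀ one_le_two (by omega)
      have a1 : (2:ℝ) ^ (m + 1) * δ'' ≤ 2 ^ (Np + 1) * δ'' :=
        mul_le_mul_of_nonneg_right hpowm hδ''0.le
      have a2 : (2:ℝ) ^ (m + 1) * ε' ≤ 2 ^ (Np + 1) * ε' :=
        mul_le_mul_of_nonneg_right hpowm hε'0.le
      rw [hc₂def]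
      have hexpand : (2:ℝ) ^ (Np + 1) * (ε' + 2 * δ'')
          = 2 ^ (Np + 1) * ε' + 2 ^ (Np + 1) * δ'' + 2 ^ (Np + 1) * δ'' := by ring
      rw [hexpand]
      linarith [htri, d1, d2, dmid, a1, a2]
    have hterm : ∀ n, n < N →
        l2 (SA.d i) (φ (cplx (q n)) - ψ (cplx (q n))) ≤ 2 * η + Lg n * c₂ := by
      intro n hn
      have hexp : φ (cplx (q n)) - ψ (cplx (q n))
          = φ (cplx (q n) - g n) + (φ (g n) - ψ (g n)) + ψ (g n - cplx (q n)) := by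
        simp only [map_sub]
        abel
      rw [hexp]
      have t1 : l2 (SA.d i) (φ (cplx (q n) - g n)) ≤ η :=
        (l2_hom_le φ _).trans (hgnorm n).le
      have t3 : l2 (SA.d i) (ψ (g n - cplx (q n))) ≤ η := by
        refine (l2_hom_le ψ _).trans ?_
        rw [norm_sub_rev]
        exact (hgnorm n).le
      have t2 : l2 (SA.d i) (φ (g n) - ψ (g n)) ≤ Lg n * c₂ := by
        apply ((Hg n (SA.d i) (SA.σ i) φ ψ c₂ hc₂0).1)
        intro t ht m hm
        have htE : t ∈ Emax := Finset.mem_biUnion.mpr ⟨n, Finset.mem_range.mpr hn, ht⟩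
        exact hdiff t htE m (hm.trans (Finset.le_sup (Finset.mem_range.mpr hn)))
      have htri := l2_add3_le (φ (cplx (q n) - g n)) (φ (g n) - ψ (g n))
        (ψ (g n - cplx (q n)))
      linarith
    have hbound := tsum_half_mul_le (f := fun n =>
        l2 (SA.d i) (φ (cplx (q n)) - ψ (cplx (q n))))
      (fun n => l2_nonneg _) (fun n => l2_diff_le_two hq φ ψ n) N
    have hhead : (∑ n ∈ Finset.range N, (1 / 2 : ℝ) ^ (n + 1) *
        l2 (SA.d i) (φ (cplx (q n)) - ψ (cplx (q n))))
        ≤ ∑ n ∈ Finset.range N, (1 / 2 : ℝ) ^ (n + 1) * (2 * η + Lg n * c₂) := by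
      refine Finset.sum_le_sum fun n hn => ?_
      exact mul_le_mul_of_nonneg_left (hterm n (Finset.mem_range.mp hn)) (by positivity)
    have hsplit : (∑ n ∈ Finset.range N, (1 / 2 : ℝ) ^ (n + 1) * (2 * η + Lg n * c₂))
        = (∑ n ∈ Finset.range N, (1 / 2 : ℝ) ^ (n + 1) * (2 * η))
          + ∑ n ∈ Finset.range N, (1 / 2 : ℝ) ^ (n + 1) * (Lg n * c₂) := by
      rw [← Finset.sum_add_distrib]
      refine Finset.sum_congr rfl fun n _ => by ring
    have hb1 : (∑ n ∈ Finset.range N, (1 / 2 : ℝ) ^ (n + 1) * (2 * η)) ≤ 2 * η := by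
      rw [← Finset.sum_mul]
      calc (∑ n ∈ Finset.range N, (1 / 2 : ℝ) ^ (n + 1)) * (2 * η)
          ≤ 1 * (2 * η) := mul_le_mul_of_nonneg_right (sum_pow_half_le_one N) (by linarith)
        _ = 2 * η := one_mul _
    have hb2 : (∑ n ∈ Finset.range N, (1 / 2 : ℝ) ^ (n + 1) * (Lg n * c₂)) ≤ Lmax * c₂ := by
      have step1 : (∑ n ∈ Finset.range N, (1 / 2 : ℝ) ^ (n + 1) * (Lg n * c₂))
          ≤ ∑ n ∈ Finset.range N, Lg n * c₂ := by
        refine Finset.sum_le_sum fun n _ => ?_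
        exact mul_le_of_le_one_left (mul_nonneg (hLg n) hc₂0)
          (pow_le_one₀ (by norm_num) (by norm_num))
      refine step1.trans ?_
      rw [← Finset.sum_mul]
      refine mul_le_mul_of_nonneg_right ?_ hc₂0
      rw [hLmaxdef]
      linarith
    have hLc : Lmax * c₂ ≤ ε / 4 := by
      have h1 : ε' + 2 * δ'' ≤ 2 * ε' := by linarith
      have h2 : c₂ ≤ 2 ^ (Np + 1) * (2 * ε') := by
        rw [hc₂def]
        exact mul_le_mul_of_nonneg_left h1 (by positivity)
      have h3 : Lmax * c₂ ≤ Lmax * (2 ^ (Np + 1) * (2 * ε')) :=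
        mul_le_mul_of_nonneg_left h2 hLmax0.le
      have h4 : Lmax * (2 ^ (Np + 1) * (2 * ε')) = ε / 4 := by
        have hLne : Lmax ≠ 0 := ne_of_gt hLmax0
        have hpne : ((2 : ℝ) ^ (Np + 1)) ≠ 0 := by positivity
        rw [hε'def, pow_succ (2:ℝ) (Np+1)]
        field_simp
      exact h3.trans (le_of_eq h4)
    have h2η : 2 * η = ε / 4 := by rw [hηdef]; ring
    calc rhoSeqC q φ ψ
        ≤ (∑ n ∈ Finset.range N, (1 / 2 : ℝ) ^ (n + 1) *
            l2 (SA.d i) (φ (cplx (q n)) - ψ (cplx (q n)))) + (1 / 2) ^ N * 2 := hbound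
      _ ≤ (2 * η + Lmax * c₂) + ε / 4 := by
          have := hhead.trans (le_of_eq hsplit)
          linarith [hb1, hb2, hN]
      _ ≤ ε := by
          rw [h2η]
          linarith
  clear_value η Np Emax Lmax ε' F'' δ'' θ N'all E'all L'max c₁ δq F
  refine le_trans (iInf_le_of_le ⟨F, hFne⟩ (iInf_le_of_le ⟨δq, hδq0⟩ le_rfl)) ?_
  exact key1.trans key2

end Main


/-- Theorem 4.5 (`T-gen comparison top`): any two dynamically generating sequences in the
unit ball of `C_ℝ(X)` have the same sofic topological entropy. -/
theorem stmt8
    {X : Type*} [TopologicalSpace X] [CompactSpace X] [TopologicalSpace.MetrizableSpace X]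
    {G : Type*} [Group G] [Countable G]
    (T : G → X → X) (hc : ∀ s : G, Continuous (T s))
    (hT1 : T 1 = id) (hTmul : ∀ s t : G, T (s * t) = T s ∘ T t)
    (SA : SoficApprox G)
    (p q : ℕ → C(X, ℝ))
    (hp : ∀ n x, |p n x| ≤ 1) (hq : ∀ n x, |q n x| ≤ 1)
    (hgenp : DynGenTop T hc p) (hgenq : DynGenTop T hc q) :
    hTop T hc SA q = hTop T hc SA p := by
  rcases isEmpty_or_nonempty X with hX | hX
  · -- degenerate case: no unital homomorphisms at all
    have hbot : ∀ r : ℕ → C(X, ℝ), hTop T hc SA r = ⊥ := by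
      intro r
      have hEmpty : ∀ i : ℕ, IsEmpty (C(X, ℂ) →ₐ[ℂ] (Fin (SA.d i) → ℂ)) := by
        intro i
        constructor
        intro φ
        have h10 : (1 : C(X, ℂ)) = 0 := by
          ext x
          exact hX.elim x
        have hm := map_one φ
        rw [h10, map_zero] at hm
        have h3 := congrFun hm ⟨0, SA.d_pos i⟩
        simp at h3
      have hlim : ∀ (ε : {ε : ℝ // 0 < ε}) (F : {F : Finset G // F.Nonempty})
          (δ : {δ : ℝ // 0 < δ}),
          limsup (fun i => ((((SA.d i : ℝ))⁻¹ : ℝ) : EReal) *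
            elog (sepNum (HomTop T hc r (F : Finset G) (δ : ℝ) (SA.σ i)) (rhoSeqC r) (ε : ℝ)))
            atTop = ⊥ := by
        intro ε F δ
        have hfun : (fun i => ((((SA.d i : ℝ))⁻¹ : ℝ) : EReal) *
            elog (sepNum (HomTop T hc r (F : Finset G) (δ : ℝ) (SA.σ i)) (rhoSeqC r) (ε : ℝ)))
            = fun _ : ℕ => (⊥ : EReal) := by
          funext i
          haveI := hEmpty i
          rw [sepNum_empty]
          have helog : elog 0 = ⊥ := by simp [elog]
          rw [helog]
          apply EReal.mul_bot_of_pos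
          apply EReal.coe_pos.mpr
          have : (0 : ℝ) < SA.d i := by exact_mod_cast SA.d_pos i
          positivity
        rw [hfun, limsup_const]
      haveI : Nonempty {ε : ℝ // 0 < ε} := ⟨⟨1, one_pos⟩⟩
      haveI : Nonempty {δ : ℝ // 0 < δ} := ⟨⟨1, one_pos⟩⟩
      haveI : Nonempty {F : Finset G // F.Nonempty} := ⟨⟨{1}, Finset.singleton_nonempty 1⟩⟩
      unfold hTop
      simp only [hlim, iInf_const, iSup_const]
    rw [hbot q, hbot p]
  · exact le_antisymm
      (hTop_le_hTop hT1 hTmul SA hp hq hgenp hgenq)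
      (hTop_le_hTop hT1 hTmul SA hq hp hgenq hgenp)

end Sofic
end
end
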